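/- For every graph G, the b-chromatic number b(G) is at most m(G), where m(G) is the largest integer k such that G has at least k vertices of degree at least k−1. -/

import Mathlib

def IsBVertex {V : Type*} (G : SimpleGraph V) {k : ℕ} (ψ : V → Fin k) (u : V) : Prop :=
  ∀ c : Fin k, c ≠ ψ u → ∃ v, G.Adj u v ∧ ψ v = c

/-- A b-coloring with `k` colors: proper, and every color class contains a b-vertex. -/
def IsBColoring {V : Type*} (G : SimpleGraph V) (k : ℕ) (ψ : V → Fin k) : Prop :=
  (∀ u v, G.Adj u v → ψ u ≠ ψ v) ∧ ∀ c : Fin k, ∃ u, ψ u = c ∧ IsBVertex G ψ u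

/-- The b-chromatic number: the largest `k` admitting a b-coloring with `k` colors. -/
noncomputable def bChromaticNumber {V : Type*} [Fintype V] (G : SimpleGraph V) : ℕ :=
  sSup {k | ∃ ψ : V → Fin k, IsBColoring G k ψ}

/-- `m(G)`: the largest `k` such that at least `k` vertices have degree at least `k - 1`. -/
noncomputable def mDegree {V : Type*} [Fintype V] (G : SimpleGraph V) : ℕ :=
  sSup {k | k ≤ {v : V | k - 1 ≤ (G.neighborSet v).ncard}.ncard}

theorem stmt1 {V : Type*} [Fintype V] (G : SimpleGraph V) :
    bChromaticNumber G ≤ mDegree G := by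
  classical
  have hsub : {k | ∃ ψ : V → Fin k, IsBColoring G k ψ} ⊆
      {k | k ≤ {v : V | k - 1 ≤ (G.neighborSet v).ncard}.ncard} := by
    rintro k ⟨ψ, hproper, hb⟩
    choose f hfψ hfb using hb
    have hfinj : Function.Injective f := by
      intro a b hab
      rw [← hfψ a, ← hfψ b, hab]
    -- each f c has degree ≥ k - 1
    have hdeg : ∀ c : Fin k, f c ∈ {v : V | k - 1 ≤ (G.neighborSet v).ncard} := by
      intro c
      have hu := hfb c
      -- define a map from colors ≠ c into neighbors
      have key : ∀ c' : Fin k, c' ≠ c → ∃ v, G.Adj (f c) v ∧ ψ v = c' := by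
        intro c' hc'
        exact hu c' (by rw [hfψ c]; exact hc')
      choose g hg1 hg2 using fun c' (h : c' ∈ ({c}ᶜ : Finset (Fin k))) =>
        key c' (by simpa using h)
      simp only [Set.mem_setOf_eq]
      have hcard : ({c}ᶜ : Finset (Fin k)).card ≤ (G.neighborFinset (f c)).card := by
        apply Finset.card_le_card_of_injOn (fun c' => if h : c' ∈ ({c}ᶜ : Finset (Fin k)) then g c' h else f c)
        · intro a ha
          have hmem : a ∈ ({c}ᶜ : Finset (Fin k)) := ha
          simp only [Finset.mem_coe, SimpleGraph.mem_neighborFinset, hmem, dif_pos]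
          exact hg1 a ha
        · intro a ha b hb hab
          simp only [Finset.mem_coe] at ha hb
          simp only [ha, hb, dif_pos] at hab
          have : ψ (g a ha) = ψ (g b hb) := by rw [hab]
          rw [hg2 a ha, hg2 b hb] at this
          exact this
      have h1 : ({c}ᶜ : Finset (Fin k)).card = k - 1 := by
        simp [Finset.card_compl]
      have h2 : (G.neighborFinset (f c)).card = (G.neighborSet (f c)).ncard := by
        rw [Set.ncard_eq_toFinset_card']
        congr 1
      omega
    -- range f has k elements and is contained in the set
    have hrange : (Set.range f) ⊆ {v : V | k - 1 ≤ (G.neighborSet v).ncard} := by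
      rintro v ⟨c, rfl⟩; exact hdeg c
    have hk : (Set.range f).ncard = k := by
      rw [Set.ncard_eq_toFinset_card', Set.toFinset_range,
        Finset.card_image_of_injective _ hfinj, Finset.card_univ, Fintype.card_fin]
    calc k = (Set.range f).ncard := hk.symm
      _ ≤ _ := Set.ncard_le_ncard hrange (Set.toFinite _)
  have hbdd : BddAbove {k | k ≤ {v : V | k - 1 ≤ (G.neighborSet v).ncard}.ncard} := by
    refine ⟨Fintype.card V, ?_⟩
    intro k hk
    exact hk.trans (le_trans (Set.ncard_le_ncard (Set.subset_univ _) (Set.toFinite _))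
      (by simp [Set.ncard_univ]))
  exact csSup_le_csSup' hbdd hsub
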